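/- If a weight λ lies outside the permutohedron Π(2ρ) (the convex hull of the Weyl orbit of 2ρ), then λ is not connected, i.e., the firing span FS_{Φ⁺}(λ) is a proper subspace of V. -/

import Mathlib

open scoped RealInnerProductSpace

noncomputable section

namespace CF

variable {V : Type*} [NormedAddCommGroup V] [InnerProductSpace ℝ V]

/-- The coroot `α∨ = 2α/⟨α,α⟩`. -/
def coroot (α : V) : V := (2 / ⟪α, α⟫) • α

/-- A reduced crystallographic root system in `V`. -/
def IsRootSystem (Φ : Set V) : Prop :=
  Φ.Finite ∧ (0 : V) ∉ Φ ∧ Submodule.span ℝ Φ = ⊤ ∧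
    (∀ α ∈ Φ, ∀ β ∈ Φ, β - ⟪β, coroot α⟫ • α ∈ Φ) ∧
    (∀ α ∈ Φ, ∀ t : ℝ, t • α ∈ Φ → t = 1 ∨ t = -1) ∧
    (∀ α ∈ Φ, ∀ β ∈ Φ, ∃ n : ℤ, ⟪β, coroot α⟫ = (n : ℝ))

/-- A choice of positive roots `Φ⁺ ⊆ Φ` (exactly one of `±α` is positive, and the positive
roots lie strictly on one side of a hyperplane). -/
def IsPositiveSystem (Φ Φp : Set V) : Prop :=
  Φp ⊆ Φ ∧ (∀ α ∈ Φ, (α ∈ Φp ∨ -α ∈ Φp) ∧ ¬(α ∈ Φp ∧ -α ∈ Φp)) ∧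
    ∃ ℓ : V →ₗ[ℝ] ℝ, ∀ α ∈ Φp, 0 < ℓ α

/-- The weight lattice `P = {v : ⟨v, α∨⟩ ∈ ℤ for all α ∈ Φ}`. -/
def weightLattice (Φ : Set V) : Set V :=
  {v | ∀ α ∈ Φ, ∃ n : ℤ, ⟪v, coroot α⟫ = (n : ℝ)}

/-- Central-firing: `λ → λ + α` whenever `α ∈ Φ⁺` and `⟨λ, α∨⟩ = 0`. -/
def fire (Φp : Set V) (lam mu : V) : Prop :=
  ∃ α ∈ Φp, ⟪lam, coroot α⟫ = 0 ∧ mu = lam + α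

/-- The Weyl group: the group of linear isometries generated by the reflections `s_α`, `α ∈ Φ`. -/
def weylGroup (Φ : Set V) : Subgroup (V ≃ₗᵢ[ℝ] V) :=
  Subgroup.closure {g | ∃ α ∈ Φ, ∀ v, g v = v - ⟪v, coroot α⟫ • α}

/-- `v` and `w` lie in the same Weyl group orbit. -/
def sameOrbit (Φ : Set V) (v w : V) : Prop := ∃ g ∈ weylGroup Φ, g v = w

def weylOrbit (Φ : Set V) (v : V) : Set V := {w | sameOrbit Φ v w}

/-- The root lattice `Q`. -/
def rootLattice (Φ : Set V) : AddSubgroup V := AddSubgroup.closure Φ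

/-- `Π^Q(λ)`: the points of the permutohedron `Π(λ) = ConvexHull(Wλ)` lying in `λ + Q`. -/
def permQ (Φ : Set V) (lam : V) : Set V :=
  {mu | mu ∈ convexHull ℝ (weylOrbit Φ lam) ∧ lam - mu ∈ rootLattice Φ}

def IsDominant (Δ : Set V) (lam : V) : Prop := ∀ a ∈ Δ, 0 ≤ ⟪lam, coroot a⟫

def IsStrictlyDominant (Δ : Set V) (lam : V) : Prop := ∀ a ∈ Δ, 0 < ⟪lam, coroot a⟫

/-- A minuscule weight: a nonzero dominant weight whose `Π^Q` consists of its Weyl orbit. -/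
def IsMinuscule (Φ Δ : Set V) (w : V) : Prop :=
  w ≠ 0 ∧ IsDominant Δ w ∧ ∀ mu ∈ permQ Φ w, sameOrbit Φ w mu

/-- `Δ` is a system of simple roots for the positive system `Φ⁺`. -/
def IsSimpleSystem (Φp : Set V) (Δ : Finset V) : Prop :=
  (Δ : Set V) ⊆ Φp ∧ LinearIndependent ℝ (fun a : (Δ : Set V) => (a : V)) ∧
    ∀ α ∈ Φp, ∃ c : V → ℝ, (∀ a ∈ Δ, 0 ≤ c a) ∧ α = ∑ a ∈ Δ, c a • a

def IsSimplyLaced (Φ : Set V) : Prop := ∀ α ∈ Φ, ∀ β ∈ Φ, ⟪α, α⟫ = ⟪β, β⟫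

/-- Irreducibility: `Φ` cannot be split into two nonempty mutually orthogonal parts. -/
def IsIrreducibleRS (Φ : Set V) : Prop :=
  ¬ ∃ S T : Set V, S.Nonempty ∧ T.Nonempty ∧ S ∪ T = Φ ∧ ∀ a ∈ S, ∀ b ∈ T, ⟪a, b⟫ = 0

/-- The firing span `FS_S(λ) = Span_ℝ{μ − λ : λ →* μ}`. -/
def firingSpan (Φp : Set V) (lam : V) : Submodule ℝ V :=
  Submodule.span ℝ {d | ∃ mu, Relation.ReflTransGen (fire Φp) lam mu ∧ d = mu - lam}

/-- Central-firing on Weyl orbits: `Wλ → Wμ` iff some representatives fire. -/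
def ofire (Φ Φp : Set V) (lam mu : V) : Prop :=
  ∃ lam' mu', sameOrbit Φ lam lam' ∧ sameOrbit Φ mu mu' ∧ fire Φp lam' mu'

/-- Connectivity of roots within a subset `Ψ` (via non-orthogonality). -/
def sameComponent (Ψ : Set V) (β γ : V) : Prop :=
  Relation.ReflTransGen (fun x y => x ∈ Ψ ∧ y ∈ Ψ ∧ ⟪x, y⟫ ≠ 0) β γ

/-- Confluence of central-firing from `λ`: all maximal firing sequences from `λ`
terminate at the same weight. -/
def ConfluentFrom (S : Set V) (lam : V) : Prop :=
  ∀ mu₁ mu₂ : V, Relation.ReflTransGen (fire S) lam mu₁ → (¬ ∃ ν, fire S mu₁ ν) →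
    Relation.ReflTransGen (fire S) lam mu₂ → (¬ ∃ ν, fire S mu₂ ν) → mu₁ = mu₂


/-! ### Auxiliary lemmas for Statement 13 -/

section Aux

lemma inner_self_ne' {β : V} (hβ : β ≠ 0) : ⟪β, β⟫ ≠ 0 := by
  intro h; exact hβ (inner_self_eq_zero.mp h)

lemma coroot_neg' (β : V) : coroot (-β) = - coroot β := by
  simp [coroot]

lemma inner_coroot_self' {β : V} (hβ : β ≠ 0) : ⟪β, coroot β⟫ = 2 := by
  rw [coroot, real_inner_smul_right, div_mul_cancel₀ _ (inner_self_ne' hβ)]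

lemma inner_coroot_eq' {α : V} (x : V) : ⟪x, coroot α⟫ = (2 / ⟪α, α⟫) * ⟪x, α⟫ :=
  real_inner_smul_right _ _ _

/-- The reflection `s_α` as a linear map. -/
def reflMap (α : V) : V →ₗ[ℝ] V where
  toFun v := v - ⟪v, coroot α⟫ • α
  map_add' x y := by
    show (x + y) - ⟪x + y, coroot α⟫ • α = _
    rw [inner_add_left, add_smul]; abel
  map_smul' c x := by
    simp only [RingHom.id_apply, real_inner_smul_left, smul_sub, smul_smul]

lemma reflMap_invol {α : V} (hα : α ≠ 0) : Function.Involutive (reflMap α) := by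
  intro v
  have h2 : ⟪α, coroot α⟫ = 2 := inner_coroot_self' hα
  show (reflMap α) ((reflMap α) v) = v
  simp only [reflMap, LinearMap.coe_mk, AddHom.coe_mk, inner_sub_left,
    real_inner_smul_left, h2]
  module

/-- The reflection `s_α` as a linear isometry equivalence. -/
def reflIso (α : V) (hα : α ≠ 0) : V ≃ₗᵢ[ℝ] V :=
  { toLinearEquiv := LinearEquiv.ofInvolutive (reflMap α) (reflMap_invol hα)
    norm_map' := by
      intro v
      have hs : ⟪α, α⟫ ≠ 0 := inner_self_ne' hα
      have hsq : ‖(reflMap α) v‖ ^ 2 = ‖v‖ ^ 2 := by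
        show ‖v - ⟪v, coroot α⟫ • α‖ ^ 2 = ‖v‖ ^ 2
        rw [norm_sub_sq_real, real_inner_smul_right, norm_smul, mul_pow,
          inner_coroot_eq', Real.norm_eq_abs, sq_abs,
          ← real_inner_self_eq_norm_sq α]
        field_simp
        ring
      show ‖(reflMap α) v‖ = ‖v‖
      rw [← Real.sqrt_sq (norm_nonneg ((reflMap α) v)), hsq,
        Real.sqrt_sq (norm_nonneg v)] }

lemma reflIso_apply {α : V} (hα : α ≠ 0) (v : V) :
    reflIso α hα v = v - ⟪v, coroot α⟫ • α := rfl

lemma reflIso_mem {Φ : Set V} {α : V} (hαΦ : α ∈ Φ) (hα : α ≠ 0) :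
    reflIso α hα ∈ weylGroup Φ :=
  Subgroup.subset_closure ⟨α, hαΦ, fun _ => rfl⟩

lemma gen_invol {Φ : Set V} (h0 : (0:V) ∉ Φ) {g : V ≃ₗᵢ[ℝ] V}
    (hg : g ∈ {g : V ≃ₗᵢ[ℝ] V | ∃ α ∈ Φ, ∀ v, g v = v - ⟪v, coroot α⟫ • α}) :
    g * g = 1 := by
  obtain ⟨α, hαΦ, hform⟩ := hg
  have hα : α ≠ 0 := fun h => h0 (h ▸ hαΦ)
  ext v
  have h2 : ⟪α, coroot α⟫ = 2 := inner_coroot_self' hα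
  show g (g v) = v
  rw [hform, hform, inner_sub_left, real_inner_smul_left, h2]
  module

lemma weylGroup_maps {Φ : Set V} (h0 : (0:V) ∉ Φ)
    (hre : ∀ α ∈ Φ, ∀ β ∈ Φ, β - ⟪β, coroot α⟫ • α ∈ Φ) :
    ∀ g ∈ weylGroup Φ, ∀ β ∈ Φ, g β ∈ Φ := by
  have key : ∀ g ∈ weylGroup Φ, (∀ β ∈ Φ, g β ∈ Φ) ∧ (∀ β ∈ Φ, g⁻¹ β ∈ Φ) := by
    intro g hg
    induction hg using Subgroup.closure_induction with
    | mem x hx =>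
      obtain ⟨α, hαΦ, hform⟩ := hx
      have hfwd : ∀ β ∈ Φ, x β ∈ Φ := by
        intro β hβ
        rw [hform]
        exact hre α hαΦ β hβ
      have hinv : x⁻¹ = x := inv_eq_of_mul_eq_one_right (gen_invol h0 ⟨α, hαΦ, hform⟩)
      exact ⟨hfwd, by rw [hinv]; exact hfwd⟩
    | one => simp
    | mul x y hx hy ihx ihy =>
      refine ⟨fun β hβ => ?_, fun β hβ => ?_⟩
      · show (x * y) β ∈ Φ
        have hc : (x * y) β = x (y β) := rfl
        rw [hc]; exact ihx.1 _ (ihy.1 β hβ)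
      · rw [mul_inv_rev]
        have hc : (y⁻¹ * x⁻¹) β = y⁻¹ (x⁻¹ β) := rfl
        rw [hc]; exact ihy.2 _ (ihx.2 β hβ)
    | inv x hx ihx => exact ⟨ihx.2, by simpa using ihx.1⟩
  exact fun g hg => (key g hg).1

lemma orbit_stable {Φ : Set V} {ρ2 : V} :
    ∀ g ∈ weylGroup Φ, ∀ z ∈ weylOrbit Φ ρ2, g z ∈ weylOrbit Φ ρ2 := by
  rintro g hg z ⟨h, hh, rfl⟩
  exact ⟨g * h, mul_mem hg hh, rfl⟩

lemma hull_stable {Φ : Set V} {ρ2 : V} {g : V ≃ₗᵢ[ℝ] V} (hg : g ∈ weylGroup Φ) :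
    ∀ z ∈ convexHull ℝ (weylOrbit Φ ρ2), g z ∈ convexHull ℝ (weylOrbit Φ ρ2) := by
  intro z hz
  have himg : g z ∈ (g.toLinearEquiv.toLinearMap : V →ₗ[ℝ] V) '' convexHull ℝ (weylOrbit Φ ρ2) :=
    ⟨z, hz, rfl⟩
  rw [LinearMap.image_convexHull] at himg
  refine convexHull_mono ?_ himg
  rintro w ⟨z', hz', rfl⟩
  exact orbit_stable g hg z' hz'

lemma orbit_finite (Φ : Finset V) (hspan : Submodule.span ℝ (Φ : Set V) = ⊤)
    (h0 : (0:V) ∉ (Φ : Set V))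
    (hre : ∀ α ∈ (Φ : Set V), ∀ β ∈ (Φ : Set V), β - ⟪β, coroot α⟫ • α ∈ (Φ : Set V))
    (v : V) : (weylOrbit (Φ : Set V) v).Finite := by
  classical
  have hmaps := weylGroup_maps h0 hre
  haveI : Finite ((Φ : Set V) : Type _) := Φ.finite_toSet.to_subtype
  have hW : {g : V ≃ₗᵢ[ℝ] V | g ∈ weylGroup (Φ : Set V)}.Finite := by
    have hT : (Set.pi Set.univ (fun _ : (Φ : Set V) => (Φ : Set V))).Finite :=
      Set.Finite.pi (fun _ => Φ.finite_toSet)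
    apply Set.Finite.of_finite_image
      (f := fun (g : V ≃ₗᵢ[ℝ] V) => fun β : (Φ : Set V) => g (β : V))
    · refine hT.subset ?_
      rintro _ ⟨g, hg, rfl⟩
      intro β _
      exact hmaps g hg β β.2
    · intro g hg g' hg' hEq
      ext v
      have hv : v ∈ Submodule.span ℝ (Φ : Set V) := by rw [hspan]; trivial
      induction hv using Submodule.span_induction with
      | mem x hx => exact congrFun hEq ⟨x, hx⟩
      | zero => simp
      | add x y _ _ ihx ihy => simp [map_add, ihx, ihy]
      | smul c x _ ihx => simp [map_smul, ihx]
  have hsub : weylOrbit (Φ : Set V) v ⊆ (fun g : V ≃ₗᵢ[ℝ] V => g v) ''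
      {g : V ≃ₗᵢ[ℝ] V | g ∈ weylGroup (Φ : Set V)} := by
    rintro w ⟨g, hg, rfl⟩
    exact ⟨g, hg, rfl⟩
  exact (hW.image _).subset hsub

/-- `⟨2ρ, β∨⟩ ≥ 2` for every positive root `β`. -/
lemma two_rho_pairing (Φ Φp : Finset V) (hΦ : IsRootSystem (Φ : Set V))
    (hp : IsPositiveSystem (Φ : Set V) (Φp : Set V)) {β : V} (hβ : β ∈ Φp) :
    2 ≤ ⟪∑ γ ∈ Φp, γ, coroot β⟫ := by
  classical
  obtain ⟨-, h0, -, hre, -, -⟩ := hΦ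
  obtain ⟨hsub, hpm, ℓ, hℓ⟩ := hp
  have hβΦ : β ∈ (Φ : Set V) := hsub (by exact_mod_cast hβ)
  have hβ0 : β ≠ 0 := fun h => h0 (h ▸ hβΦ)
  have h2 : ⟪β, coroot β⟫ = 2 := inner_coroot_self' hβ0
  set f : V → ℝ := fun γ => ⟪γ, coroot β⟫ with hf
  have hsum : ⟪∑ γ ∈ Φp, γ, coroot β⟫ = ∑ γ ∈ Φp, f γ := by
    rw [sum_inner]
  set s : V → V := fun γ => γ - f γ • β with hsdef
  have hfs : ∀ γ, f (s γ) = - f γ := by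
    intro γ
    show ⟪γ - f γ • β, coroot β⟫ = - f γ
    rw [inner_sub_left, real_inner_smul_left, h2]
    ring
  have hss : ∀ γ, s (s γ) = γ := by
    intro γ
    show s γ - f (s γ) • β = γ
    rw [hfs]
    simp [hsdef]
  set A := Φp.filter (fun γ => s γ ∈ Φp) with hA
  set B := Φp.filter (fun γ => s γ ∉ Φp) with hB
  have hAB : ∑ γ ∈ Φp, f γ = ∑ γ ∈ A, f γ + ∑ γ ∈ B, f γ :=
    (Finset.sum_filter_add_sum_filter_not _ _ _).symm
  have hA0 : ∑ γ ∈ A, f γ = 0 := by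
    apply Finset.sum_involution (fun γ _ => s γ)
    · intro γ hγ
      rw [hfs]; ring
    · intro γ hγ hfγ
      intro h
      apply hfγ
      have hz : f γ • β = 0 := by
        have hc := congrArg (fun x => γ - x) h.symm
        simpa [hsdef] using hc.symm
      rcases smul_eq_zero.mp hz with h' | h'
      · exact h'
      · exact absurd h' hβ0
    · intro γ hγ
      rw [hA, Finset.mem_filter] at hγ ⊢
      exact ⟨hγ.2, by rw [hss]; exact hγ.1⟩
    · intro γ hγ
      exact hss γ
  have hBpos : ∀ γ ∈ B, 0 < f γ := by
    intro γ hγ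
    rw [hB, Finset.mem_filter] at hγ
    obtain ⟨hγp, hγs⟩ := hγ
    have hγΦ : γ ∈ (Φ : Set V) := hsub (by exact_mod_cast hγp)
    have hsγΦ : s γ ∈ (Φ : Set V) := hre β hβΦ γ hγΦ
    have hneg : -(s γ) ∈ (Φp : Set V) := by
      rcases (hpm (s γ) hsγΦ).1 with h | h
      · exact absurd (by exact_mod_cast h) hγs
      · exact h
    have hl1 : 0 < ℓ γ := hℓ γ (by exact_mod_cast hγp)
    have hl2 : 0 < ℓ (-(s γ)) := hℓ _ hneg
    have hlβ : 0 < ℓ β := hℓ β (by exact_mod_cast hβ)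
    have hcomb : ℓ γ + ℓ (-(s γ)) = f γ * ℓ β := by
      rw [map_neg]
      have hd : γ - s γ = f γ • β := by simp [hsdef]
      have h' := congrArg ℓ hd
      rw [map_sub, map_smul] at h'
      rw [← sub_eq_add_neg]
      simpa [smul_eq_mul] using h'
    have hpos : 0 < f γ * ℓ β := hcomb ▸ add_pos hl1 hl2
    rcases mul_pos_iff.mp hpos with h | h
    · exact h.1
    · exact absurd hlβ (not_lt.mpr h.2.le)
  have hβB : β ∈ B := by
    rw [hB, Finset.mem_filter]
    refine ⟨hβ, ?_⟩
    have hsβ : s β = -β := by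
      show β - f β • β = -β
      have hfb : f β = 2 := h2
      rw [hfb]
      module
    rw [hsβ]
    intro hcon
    exact (hpm β hβΦ).2 ⟨by exact_mod_cast hβ, by exact_mod_cast hcon⟩
  have hfβ : f β = 2 := h2
  have hle : f β ≤ ∑ γ ∈ B, f γ :=
    Finset.single_le_sum (fun i hi => (hBpos i hi).le) hβB
  rw [hsum, hAB, hA0, zero_add]
  rw [hfβ] at hle
  exact hle

/-- every vertex of `Π(2ρ)` pairs with every positive coroot to a value of absolute
value at least 2. -/
lemma vertex_pairing (Φ Φp : Finset V) (hΦ : IsRootSystem (Φ : Set V))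
    (hp : IsPositiveSystem (Φ : Set V) (Φp : Set V)) {α : V} (hα : α ∈ Φp) {z : V}
    (hz : z ∈ weylOrbit (Φ : Set V) (∑ γ ∈ Φp, γ)) :
    2 ≤ ⟪z, coroot α⟫ ∨ ⟪z, coroot α⟫ ≤ -2 := by
  obtain ⟨g, hg, rfl⟩ := hz
  have hαΦ : α ∈ (Φ : Set V) := hp.1 (by exact_mod_cast hα)
  have hβΦ : g.symm α ∈ (Φ : Set V) := by
    have hginv : g⁻¹ ∈ weylGroup (Φ : Set V) := inv_mem hg
    have := weylGroup_maps hΦ.2.1 hΦ.2.2.2.1 g⁻¹ hginv α hαΦ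
    exact this
  set β := g.symm α with hβdef
  have hkey : ⟪g (∑ γ ∈ Φp, γ), coroot α⟫ = ⟪∑ γ ∈ Φp, γ, coroot β⟫ := by
    have hgβ : g β = α := g.apply_symm_apply α
    have hcor : coroot α = g (coroot β) := by
      rw [← hgβ]
      show coroot (g β) = g (coroot β)
      rw [coroot, coroot, LinearIsometryEquiv.inner_map_map, map_smul]
    rw [hcor, LinearIsometryEquiv.inner_map_map]
  rcases (hp.2.1 β hβΦ).1 with h | h
  · left
    rw [hkey]
    exact two_rho_pairing Φ Φp hΦ hp (by exact_mod_cast h)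
  · right
    rw [hkey]
    have h2 : 2 ≤ ⟪∑ γ ∈ Φp, γ, coroot (-β)⟫ :=
      two_rho_pairing Φ Φp hΦ hp (by exact_mod_cast h)
    rw [coroot_neg', inner_neg_right] at h2
    linarith

/-- Claim E: the permutohedron is closed under adding a positive root orthogonal to the
given point. -/
lemma perm_add_orth_root (Φ Φp : Finset V) (hΦ : IsRootSystem (Φ : Set V))
    (hp : IsPositiveSystem (Φ : Set V) (Φp : Set V)) {x α : V} (hα : α ∈ Φp)
    (hx : x ∈ convexHull ℝ (weylOrbit (Φ : Set V) (∑ γ ∈ Φp, γ)))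
    (horth : ⟪x, coroot α⟫ = 0) :
    x + α ∈ convexHull ℝ (weylOrbit (Φ : Set V) (∑ γ ∈ Φp, γ)) := by
  classical
  set O := weylOrbit (Φ : Set V) (∑ γ ∈ Φp, γ) with hO
  have hαΦ : α ∈ (Φ : Set V) := hp.1 (by exact_mod_cast hα)
  have hα0 : α ≠ 0 := fun h => hΦ.2.1 (h ▸ hαΦ)
  -- the affine map z ↦ z - (⟨z,α∨⟩/2)•α + α
  set L : V →ₗ[ℝ] V :=
    { toFun := fun z => z - (⟪z, coroot α⟫ / 2) • α
      map_add' := by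
        intro a b
        show (a + b) - (⟪a + b, coroot α⟫ / 2) • α = _
        rw [inner_add_left, add_div, add_smul]; abel
      map_smul' := by
        intro c a
        simp only [RingHom.id_apply, real_inner_smul_left, smul_sub, smul_smul,
          mul_div_assoc] } with hL
  set F : V →ᵃ[ℝ] V := AffineMap.mk' (fun z => L z + α) L 0 (by
    intro p'
    simp) with hF
  have hFx : F x = x + α := by
    show L x + α = x + α
    show x - (⟪x, coroot α⟫ / 2) • α + α = x + α
    rw [horth]
    norm_num
  have himg : F x ∈ F '' (convexHull ℝ O) := ⟨x, hx, rfl⟩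
  rw [AffineMap.image_convexHull] at himg
  have hsub : convexHull ℝ (F '' O) ⊆ convexHull ℝ O := by
    apply convexHull_min ?_ (convex_convexHull ℝ O)
    rintro _ ⟨z, hz, rfl⟩
    -- show F z ∈ convexHull ℝ O
    set k := ⟪z, coroot α⟫ with hk
    have hkON : 2 ≤ k ∨ k ≤ -2 := vertex_pairing Φ Φp hΦ hp hα hz
    have hk0 : k ≠ 0 := by rcases hkON with h | h <;> intro hc <;> rw [hc] at h <;> linarith
    have hSmem : reflIso α hα0 ∈ weylGroup (Φ : Set V) := reflIso_mem hαΦ hα0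
    have hsz : z - k • α ∈ O := by
      have := orbit_stable _ hSmem z hz
      rwa [reflIso_apply, ← hk] at this
    obtain ⟨t, ht⟩ : ∃ t : ℝ, t = 1/2 - 1/k := ⟨_, rfl⟩
    have htk : t * k = k/2 - 1 := by
      rw [ht]
      field_simp
    have hbounds : 0 ≤ t ∧ t ≤ 1 := by
      rcases hkON with h | h
      · have hkpos : (0:ℝ) < k := by linarith
        have h1 : 1/k ≤ 1/2 := by
          rw [div_le_div_iff₀ hkpos (by norm_num)]
          linarith
        have h2 : 0 < 1/k := by positivity
        constructor <;> rw [ht] <;> linarith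
      · have hkneg : k < 0 := by linarith
        have h1 : 1/k < 0 := div_neg_of_pos_of_neg one_pos hkneg
        have h2 : -(1/k) ≤ 1/2 := by
          rw [← one_div_neg_eq_neg_one_div]
          rw [div_le_div_iff₀ (by linarith) (by norm_num)]
          linarith
        constructor <;> rw [ht] <;> linarith
    have hcombo : F z = (1 - t) • z + t • (z - k • α) := by
      show L z + α = _
      show z - (⟪z, coroot α⟫ / 2) • α + α = _
      rw [← hk]
      have hexp : (1 - t) • z + t • (z - k • α) = z - (t * k) • α := by module
      rw [hexp, htk]
      module
    rw [hcombo]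
    exact (convex_convexHull ℝ O) (subset_convexHull ℝ O hz) (subset_convexHull ℝ O hsz)
      (by linarith [hbounds.1, hbounds.2]) hbounds.1 (by ring)
  exact hFx ▸ hsub himg

end Aux

/-- a weight outside the permutohedron `Π(2ρ)` is not connected, i.e. its
firing span is a proper subspace of `V`.  Here `2ρ = ∑_{α ∈ Φ⁺} α`. -/
theorem not_connected_outside_two_rho (Φ Φp : Finset V)
    (hΦ : IsRootSystem (Φ : Set V)) (hp : IsPositiveSystem (Φ : Set V) (Φp : Set V))
    (lam : V) (hlam : lam ∈ weightLattice (Φ : Set V))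
    (hout : lam ∉ convexHull ℝ (weylOrbit (Φ : Set V) (∑ α ∈ Φp, α))) :
    firingSpan (Φp : Set V) lam ≠ ⊤ := by
  classical
  obtain ⟨hfin, h0, hspan, hre, hred, hcrys⟩ := hΦ
  set ρ2 : V := ∑ α ∈ Φp, α with hρ2
  set O := weylOrbit (Φ : Set V) ρ2 with hOdef
  set K := convexHull ℝ O with hK
  have hOfin : O.Finite := orbit_finite Φ hspan h0 hre ρ2
  have hKcp : IsCompact K := hOfin.isCompact_convexHull ℝ
  have hρ2O : ρ2 ∈ O := ⟨1, one_mem _, rfl⟩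
  have hKne : K.Nonempty := ⟨ρ2, subset_convexHull ℝ O hρ2O⟩
  -- nearest point
  obtain ⟨p, hpK, hminOn⟩ := hKcp.exists_isMinOn hKne
    (Continuous.continuousOn (by continuity : Continuous fun y : V => ‖lam - y‖))
  have hmin : ∀ y ∈ K, ‖lam - p‖ ≤ ‖lam - y‖ := fun y hy => hminOn hy
  set u : V := lam - p with hu
  have hu0 : u ≠ 0 := by
    intro h
    apply hout
    have : lam = p := by
      have := sub_eq_zero.mp h
      exact this
    rw [this]
    exact hpK
  -- variational inequality
  have hvar : ∀ y ∈ K, ⟪u, y - p⟫ ≤ 0 := by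
    intro y hy
    by_contra hcon
    push_neg at hcon
    set c := ⟪u, y - p⟫ with hc
    have hyp : y - p ≠ 0 := by
      intro h
      rw [hc, h, inner_zero_right] at hcon
      exact lt_irrefl _ hcon
    set d := ‖y - p‖ ^ 2 with hd
    have hdpos : 0 < d := by
      rw [hd]
      exact pow_pos (norm_pos_iff.mpr hyp) 2
    set t : ℝ := min 1 (c / d) with htdef
    have ht0 : 0 < t := lt_min one_pos (div_pos hcon hdpos)
    have ht1 : t ≤ 1 := min_le_left _ _
    have htc : t ≤ c / d := min_le_right _ _
    have hqK : p + t • (y - p) ∈ K := by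
      have hcomb : p + t • (y - p) = (1 - t) • p + t • y := by module
      rw [hcomb]
      exact (convex_convexHull ℝ O) hpK hy (by linarith) ht0.le (by ring)
    have hsq : ‖lam - (p + t • (y - p))‖ ^ 2 < ‖lam - p‖ ^ 2 := by
      have hrw : lam - (p + t • (y - p)) = u - t • (y - p) := by rw [hu]; module
      rw [hrw, norm_sub_sq_real, real_inner_smul_right, norm_smul, mul_pow,
        Real.norm_eq_abs, sq_abs, ← hc, ← hd]
      have htd : t * d ≤ c := by
        rw [← le_div_iff₀ hdpos]
        exact htc
      nlinarith
    have hge : ‖lam - p‖ ≤ ‖lam - (p + t • (y - p))‖ := hmin _ hqK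
    have hge2 : ‖lam - p‖ ^ 2 ≤ ‖lam - (p + t • (y - p))‖ ^ 2 :=
      pow_le_pow_left₀ (norm_nonneg _) hge 2
    linarith
  -- the invariant along central-firing
  have hinv : ∀ mu, Relation.ReflTransGen (fire (Φp : Set V)) lam mu →
      (mu - u ∈ K ∧ ⟪mu - lam, u⟫ = 0) := by
    intro mu h
    induction h with
    | refl =>
      constructor
      · have : lam - u = p := by rw [hu]; abel
        rw [this]; exact hpK
      · simp
    | tail hab hbc ih =>
      rename_i b c
      obtain ⟨hbK, hbin⟩ := ih
      obtain ⟨α, hαp, horthb, rfl⟩ := hbc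
      have hαp' : α ∈ Φp := by exact_mod_cast hαp
      have hαΦ : α ∈ (Φ : Set V) := hp.1 hαp
      have hα0 : α ≠ 0 := fun h => h0 (h ▸ hαΦ)
      have hspos : 0 < ⟪α, α⟫ :=
        lt_of_le_of_ne real_inner_self_nonneg (Ne.symm (inner_self_ne' hα0))
      -- first: ⟪u, α⟫ = 0
      have hSmem : reflIso α hα0 ∈ weylGroup (Φ : Set V) := reflIso_mem hαΦ hα0
      have hyK : reflIso α hα0 (b - u) ∈ K := hull_stable hSmem _ hbK
      have hbu : ⟪b - u, coroot α⟫ = - ⟪u, coroot α⟫ := by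
        rw [inner_sub_left, horthb]; ring
      have hyform : reflIso α hα0 (b - u) = (b - u) + ⟪u, coroot α⟫ • α := by
        rw [reflIso_apply, hbu]
        module
      have hineq := hvar _ hyK
      rw [hyform] at hineq
      have hexp : ((b - u) + ⟪u, coroot α⟫ • α) - p = (b - lam) + ⟪u, coroot α⟫ • α := by
        rw [hu]; module
      rw [hexp, inner_add_right, real_inner_smul_right] at hineq
      have hub : ⟪u, b - lam⟫ = 0 := by rw [real_inner_comm]; exact hbin
      rw [hub, zero_add, inner_coroot_eq'] at hineq
      -- hineq : 2/⟪α,α⟫ * ⟪u,α⟫ * ⟪u,α⟫ ≤ 0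
      have huα : ⟪u, α⟫ = 0 := by
        by_contra hne
        have h1 : 0 < ⟪u, α⟫ * ⟪u, α⟫ := mul_self_pos.mpr hne
        have h2 : 0 < 2 / ⟪α, α⟫ := by positivity
        nlinarith
      have hucor : ⟪u, coroot α⟫ = 0 := by
        rw [inner_coroot_eq', huα, mul_zero]
      -- apply claim E at b - u
      have hborth : ⟪b - u, coroot α⟫ = 0 := by rw [hbu, hucor, neg_zero]
      have hmem := perm_add_orth_root Φ Φp
        ⟨hfin, h0, hspan, hre, hred, hcrys⟩ hp hαp' hbK hborth
      constructor
      · have : b + α - u = b - u + α := by abel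
        rw [this]
        exact hmem
      · have hαu : ⟪α, u⟫ = 0 := by rw [real_inner_comm]; exact huα
        have : b + α - lam = (b - lam) + α := by abel
        rw [this, inner_add_left, hbin, hαu, add_zero]
  -- conclude
  intro htop
  have hle : firingSpan (Φp : Set V) lam ≤ (ℝ ∙ u)ᗮ := by
    apply Submodule.span_le.mpr
    rintro d ⟨mu, hreach, rfl⟩
    rw [SetLike.mem_coe, Submodule.mem_orthogonal_singleton_iff_inner_right]
    rw [real_inner_comm]
    exact (hinv mu hreach).2
  have humem : u ∈ firingSpan (Φp : Set V) lam := by rw [htop]; trivial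
  have : ⟪u, u⟫ = 0 :=
    Submodule.mem_orthogonal_singleton_iff_inner_right.mp (hle humem)
  exact hu0 (inner_self_eq_zero.mp this)


end CF
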